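/- arXiv:2102.07093 — 5 statements merged into one kernel-verified Lean document; each statement's English description precedes it below -/
import Mathlib

section
/- Let σ₁, σ₂, ν₁, ν₂ be positive reals, let Q₁ and Q₂ be d×d real positive definite matrices, and set Q = ν₁·Q₁ + ν₂·Q₂. Then (σ₁²/ν₁)·Q₁⁻¹ + (σ₂²/ν₂)·Q₂⁻¹ ⪰ (σ₁+σ₂)²·Q⁻¹. Moreover, if Q₁ = Q₂ = Q and ν₁ = σ₁/(σ₁+σ₂), ν₂ = σ₂/(σ₁+σ₂), then equality holds: (σ₁²/ν₁)·Q₁⁻¹ + (σ₂²/ν₂)·Q₂⁻¹ = (σ₁+σ₂)²·Q⁻¹. -/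
open Matrix

lemma smulPD {d : ℕ} {c : ℝ} (hc : 0 < c) {A : Matrix (Fin d) (Fin d) ℝ}
    (hA : A.PosDef) : (c • A).PosDef := by
  constructor
  · unfold Matrix.IsHermitian
    rw [conjTranspose_smul, hA.1.eq]
    simp [star_trivial]
  · intro x hx
    have := hA.2 hx
    convert mul_pos hc this using 1
    rw [Finsupp.mul_sum]
    refine Finsupp.sum_congr fun i _ => ?_
    rw [Finsupp.mul_sum]
    refine Finsupp.sum_congr fun j _ => ?_
    simp only [Matrix.smul_apply, smul_eq_mul, star_trivial]
    ring

lemma smulInv {d : ℕ} {c : ℝ} (hc : c ≠ 0) {A : Matrix (Fin d) (Fin d) ℝ}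
    (hA : A.PosDef) : (c • A)⁻¹ = c⁻¹ • A⁻¹ := by
  apply Matrix.inv_eq_right_inv
  rw [Matrix.smul_mul, Matrix.mul_smul, smul_smul, mul_inv_cancel₀ hc,
    Matrix.mul_nonsing_inv _ hA.det_pos.ne'.isUnit, one_smul]

lemma keyeq {d : ℕ} (C X : Matrix (Fin d) (Fin d) ℝ) (hC : C.PosDef) (hX : Xᴴ = X) :
    (X - C⁻¹)ᴴ * C * (X - C⁻¹) = C⁻¹ + X * C * X - X - X := by
  have hu : IsUnit C.det := hC.det_pos.ne'.isUnit
  have h1 : C⁻¹ * C = 1 := nonsing_inv_mul C hu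
  have h2 : C * C⁻¹ = 1 := mul_nonsing_inv C hu
  have hCi : C⁻¹ᴴ = C⁻¹ := by rw [conjTranspose_nonsing_inv, hC.1.eq]
  rw [conjTranspose_sub, hX, hCi]
  rw [Matrix.sub_mul, Matrix.sub_mul, Matrix.mul_sub, Matrix.mul_sub]
  rw [Matrix.mul_assoc X C C⁻¹, h2, Matrix.mul_one, h1, Matrix.one_mul, Matrix.one_mul]
  abel

lemma keyPSD {d : ℕ} (C X : Matrix (Fin d) (Fin d) ℝ) (hC : C.PosDef) (hX : Xᴴ = X) :
    (C⁻¹ + X * C * X - X - X).PosSemidef := by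
  rw [← keyeq C X hC hX]
  exact hC.posSemidef.conjTranspose_mul_mul_same _

/-- For positive reals `σ₁ σ₂ ν₁ ν₂` and positive definite `Q₁ Q₂` with
`Q = ν₁ • Q₁ + ν₂ • Q₂`, we have
`(σ₁²/ν₁) • Q₁⁻¹ + (σ₂²/ν₂) • Q₂⁻¹ ⪰ (σ₁+σ₂)² • Q⁻¹`, with equality when
`Q₁ = Q₂ = Q` and `ν₁ = σ₁/(σ₁+σ₂)`, `ν₂ = σ₂/(σ₁+σ₂)`. -/
theorem variance_matrix_lower_bound
    (d : ℕ) (σ1 σ2 ν1 ν2 : ℝ)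
    (hσ1 : 0 < σ1) (hσ2 : 0 < σ2) (hν1 : 0 < ν1) (hν2 : 0 < ν2)
    (Q1 Q2 Q : Matrix (Fin d) (Fin d) ℝ)
    (hQ1 : Q1.PosDef) (hQ2 : Q2.PosDef)
    (hQ : Q = ν1 • Q1 + ν2 • Q2) :
    ((σ1 ^ 2 / ν1) • Q1⁻¹ + (σ2 ^ 2 / ν2) • Q2⁻¹
        - (σ1 + σ2) ^ 2 • Q⁻¹).PosSemidef
    ∧ (Q1 = Q → Q2 = Q → ν1 = σ1 / (σ1 + σ2) → ν2 = σ2 / (σ1 + σ2) →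
        (σ1 ^ 2 / ν1) • Q1⁻¹ + (σ2 ^ 2 / ν2) • Q2⁻¹ = (σ1 + σ2) ^ 2 • Q⁻¹) := by
  have hQpd : Q.PosDef := hQ ▸ (smulPD hν1 hQ1).add (smulPD hν2 hQ2)
  have huQ : IsUnit Q.det := hQpd.det_pos.ne'.isUnit
  have hQinvH : Q⁻¹ᴴ = Q⁻¹ := by rw [conjTranspose_nonsing_inv, hQpd.1.eq]
  constructor
  · set c1 : ℝ := σ1 ^ 2 / ν1 with hc1
    set c2 : ℝ := σ2 ^ 2 / ν2 with hc2
    have hc1pos : 0 < c1 := div_pos (pow_pos hσ1 2) hν1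
    have hc2pos : 0 < c2 := div_pos (pow_pos hσ2 2) hν2
    set C1 := c1⁻¹ • Q1 with hC1def
    set C2 := c2⁻¹ • Q2 with hC2def
    have hC1 : C1.PosDef := smulPD (inv_pos.2 hc1pos) hQ1
    have hC2 : C2.PosDef := smulPD (inv_pos.2 hc2pos) hQ2
    set X1 := ((σ1 + σ2) * σ1) • Q⁻¹ with hX1def
    set X2 := ((σ1 + σ2) * σ2) • Q⁻¹ with hX2def
    have hX1 : X1ᴴ = X1 := by rw [hX1def, conjTranspose_smul, hQinvH]; simp [star_trivial]
    have hX2 : X2ᴴ = X2 := by rw [hX2def, conjTranspose_smul, hQinvH]; simp [star_trivial]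
    have hinv1 : C1⁻¹ = c1 • Q1⁻¹ := by
      rw [hC1def, smulInv (inv_ne_zero hc1pos.ne') hQ1, inv_inv]
    have hinv2 : C2⁻¹ = c2 • Q2⁻¹ := by
      rw [hC2def, smulInv (inv_ne_zero hc2pos.ne') hQ2, inv_inv]
    have hm1 : X1 * C1 * X1 = ((σ1 + σ2) ^ 2 * ν1) • (Q⁻¹ * Q1 * Q⁻¹) := by
      rw [hX1def, hC1def]
      simp only [Matrix.smul_mul, Matrix.mul_smul, smul_smul]
      congr 1
      rw [hc1]
      field_simp
    have hm2 : X2 * C2 * X2 = ((σ1 + σ2) ^ 2 * ν2) • (Q⁻¹ * Q2 * Q⁻¹) := by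
      rw [hX2def, hC2def]
      simp only [Matrix.smul_mul, Matrix.mul_smul, smul_smul]
      congr 1
      rw [hc2]
      field_simp
    have hrel : ν1 • (Q⁻¹ * Q1 * Q⁻¹) + ν2 • (Q⁻¹ * Q2 * Q⁻¹) = Q⁻¹ := by
      have : Q⁻¹ * Q * Q⁻¹ = Q⁻¹ := by
        rw [nonsing_inv_mul _ huQ, Matrix.one_mul]
      calc ν1 • (Q⁻¹ * Q1 * Q⁻¹) + ν2 • (Q⁻¹ * Q2 * Q⁻¹)
          = Q⁻¹ * (ν1 • Q1 + ν2 • Q2) * Q⁻¹ := by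
            rw [Matrix.mul_add, Matrix.add_mul, Matrix.mul_smul, Matrix.smul_mul,
              Matrix.mul_smul, Matrix.smul_mul]
        _ = Q⁻¹ := by rw [← hQ, this]
    have hsum : ((σ1 ^ 2 / ν1) • Q1⁻¹ + (σ2 ^ 2 / ν2) • Q2⁻¹
        - (σ1 + σ2) ^ 2 • Q⁻¹)
        = (C1⁻¹ + X1 * C1 * X1 - X1 - X1) + (C2⁻¹ + X2 * C2 * X2 - X2 - X2) := by
      rw [hinv1, hinv2, hm1, hm2, hX1def, hX2def, ← hc1, ← hc2]
      linear_combination (norm := module) (-(σ1 + σ2) ^ 2 : ℝ) • hrel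
    rw [hsum]
    exact (keyPSD C1 X1 hC1 hX1).add (keyPSD C2 X2 hC2 hX2)
  · intro h1 h2 hn1 hn2
    subst h1
    have hσs : σ1 + σ2 ≠ 0 := by positivity
    rw [← h2, hn1, hn2, ← add_smul]
    congr 1
    field_simp
end

section
/- For every x ∈ [0,1]^p one has V_π(x) ≥ (σ₁+σ₂)² · (1,xᵀ) Q⁻¹ (1,xᵀ)ᵀ; that is, V_π(x) is minimized uniformly in x by the constant allocation π₁(x) ≡ σ₁/(σ₁+σ₂), π₂(x) ≡ σ₂/(σ₁+σ₂), for which V_π(x) = (σ₁+σ₂)² · (1,xᵀ) Q⁻¹ (1,xᵀ)ᵀ for all x. -/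
open Matrix MeasureTheory

/-- The feature vector `(1, xᵀ)ᵀ ∈ ℝ^{p+1}` of a covariate vector `x ∈ ℝ^p`. -/
def feat {p : ℕ} (x : Fin p → ℝ) : Fin (p + 1) → ℝ := Fin.cons 1 x

lemma feat_measurable {p : ℕ} (i : Fin (p + 1)) :
    Measurable fun x : Fin p → ℝ => feat x i := by
  unfold feat
  refine Fin.cases ?_ ?_ i
  · simpa using measurable_const
  · intro j; simpa using measurable_pi_apply j

lemma feat_mem_Icc {p : ℕ} {x : Fin p → ℝ} (hx : x ∈ Set.Icc (0 : Fin p → ℝ) 1)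
    (i : Fin (p + 1)) : feat x i ∈ Set.Icc (0 : ℝ) 1 := by
  obtain ⟨h0, h1⟩ := hx
  unfold feat
  refine Fin.cases ?_ ?_ i
  · simp
  · intro j; simp only [Fin.cons_succ]
    exact ⟨h0 j, h1 j⟩

/-- Cauchy–Schwarz for a positive definite real matrix. -/
lemma cs_posdef {n : ℕ} (M : Matrix (Fin n) (Fin n) ℝ) (hM : M.PosDef)
    (v w : Fin n → ℝ) :
    (w ⬝ᵥ v) ^ 2 ≤ (w ⬝ᵥ M *ᵥ w) * (v ⬝ᵥ M⁻¹ *ᵥ v) := by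
  have hdet : IsUnit M.det := isUnit_iff_ne_zero.mpr hM.det_pos.ne'
  set u := M⁻¹ *ᵥ v with hu
  have hMu : M *ᵥ u = v := by
    rw [hu, mulVec_mulVec, Matrix.mul_nonsing_inv M hdet, one_mulVec]
  have hT : Mᵀ = M := by
    have := hM.1.eq
    simpa using this
  have hsymm : ∀ a b : Fin n → ℝ, a ⬝ᵥ M *ᵥ b = b ⬝ᵥ M *ᵥ a := by
    intro a b
    rw [dotProduct_mulVec, ← mulVec_transpose, hT, dotProduct_comm]
  have hquad : ∀ t : ℝ, 0 ≤ (w ⬝ᵥ M *ᵥ w) * (t * t) + (2 * (w ⬝ᵥ v)) * t + (v ⬝ᵥ M⁻¹ *ᵥ v) := by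
    intro t
    have h0 : 0 ≤ (t • w + u) ⬝ᵥ M *ᵥ (t • w + u) := by
      rcases eq_or_ne (t • w + u) 0 with h | h
      · rw [h]; simp
      · have := hM.dotProduct_mulVec_pos h; rw [star_trivial] at this; exact this.le
    have hexp : (t • w + u) ⬝ᵥ M *ᵥ (t • w + u)
        = (w ⬝ᵥ M *ᵥ w) * (t * t) + (2 * (w ⬝ᵥ v)) * t + (v ⬝ᵥ M⁻¹ *ᵥ v) := by
      have h1 : u ⬝ᵥ M *ᵥ w = w ⬝ᵥ M *ᵥ u := hsymm u w
      have h2 : w ⬝ᵥ M *ᵥ u = w ⬝ᵥ v := by rw [hMu]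
      have h3 : u ⬝ᵥ M *ᵥ u = v ⬝ᵥ M⁻¹ *ᵥ v := by
        rw [hMu]; exact dotProduct_comm u v
      simp only [mulVec_add, mulVec_smul, dotProduct_add, add_dotProduct,
        smul_dotProduct, dotProduct_smul, smul_eq_mul]
      rw [h1, h2, h3]; ring
    rw [← hexp]; exact h0
  have hd := discrim_le_zero hquad
  rw [discrim] at hd
  nlinarith [hd]

lemma key_scalar (σ1 σ2 a1 a2 B1 B2 : ℝ) (hσ1 : 0 < σ1) (hσ2 : 0 < σ2)
    (ha1 : 0 < a1) (ha2 : 0 < a2)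
    (hB1 : (a1 + a2) ^ 2 ≤ a1 * B1) (hB2 : (a1 + a2) ^ 2 ≤ a2 * B2) :
    (σ1 + σ2) ^ 2 * (a1 + a2) ≤ σ1 ^ 2 * B1 + σ2 ^ 2 * B2 := by
  have hmul : a1 * a2 * ((σ1 + σ2) ^ 2 * (a1 + a2)) ≤ a1 * a2 * (σ1 ^ 2 * B1 + σ2 ^ 2 * B2) := by
    nlinarith [mul_le_mul_of_nonneg_left hB1 (by positivity : (0:ℝ) ≤ σ1 ^ 2 * a2),
      mul_le_mul_of_nonneg_left hB2 (by positivity : (0:ℝ) ≤ σ2 ^ 2 * a1),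
      sq_nonneg (σ1 * a2 - σ2 * a1), mul_pos ha1 ha2, sq_nonneg (a1 + a2)]
  exact le_of_mul_le_mul_left hmul (mul_pos ha1 ha2)

/-- In the two-treatment linear-model setting, the variance function
`V_π(x) = (1,xᵀ)(Σ₁+Σ₂)(1,xᵀ)ᵀ` satisfies
`V_π(x) ≥ (σ₁+σ₂)² (1,xᵀ) Q⁻¹ (1,xᵀ)ᵀ` for every `x ∈ [0,1]^p`, and the
constant allocation `π₁ ≡ σ₁/(σ₁+σ₂)`, `π₂ ≡ σ₂/(σ₁+σ₂)` attains this bound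
uniformly in `x`. -/
theorem variance_uniformly_minimized
    (p : ℕ) (hp : 1 ≤ p)
    (f π1 π2 : (Fin p → ℝ) → ℝ) (σ1 σ2 : ℝ)
    (hσ1 : 0 < σ1) (hσ2 : 0 < σ2)
    (hf_meas : Measurable f) (hf_nonneg : ∀ x, 0 ≤ f x)
    (hf_bdd : ∃ C, ∀ x, f x ≤ C)
    (hf_density : ∫ x in Set.Icc (0 : Fin p → ℝ) 1, f x = 1)
    (hπ1_meas : Measurable π1) (hπ2_meas : Measurable π2)
    (hπ1_range : ∀ x, π1 x ∈ Set.Icc (0 : ℝ) 1)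
    (hπ2_range : ∀ x, π2 x ∈ Set.Icc (0 : ℝ) 1)
    (hπ_sum : ∀ x, π1 x + π2 x = 1)
    (ν1 ν2 : ℝ)
    (hν1 : ν1 = ∫ x in Set.Icc (0 : Fin p → ℝ) 1, π1 x * f x)
    (hν2 : ν2 = ∫ x in Set.Icc (0 : Fin p → ℝ) 1, π2 x * f x)
    (hν1_pos : 0 < ν1) (hν2_pos : 0 < ν2)
    (Q1 Q2 Q : Matrix (Fin (p + 1)) (Fin (p + 1)) ℝ)
    (hQ1 : ∀ i j, Q1 i j =
      (1 / ν1) * ∫ x in Set.Icc (0 : Fin p → ℝ) 1,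
        feat x i * feat x j * π1 x * f x)
    (hQ2 : ∀ i j, Q2 i j =
      (1 / ν2) * ∫ x in Set.Icc (0 : Fin p → ℝ) 1,
        feat x i * feat x j * π2 x * f x)
    (hQ : ∀ i j, Q i j =
      ∫ x in Set.Icc (0 : Fin p → ℝ) 1, feat x i * feat x j * f x)
    (hQ1_pos : Q1.PosDef) (hQ2_pos : Q2.PosDef) (hQ_pos : Q.PosDef) :
    (∀ x ∈ Set.Icc (0 : Fin p → ℝ) 1,
      (σ1 + σ2) ^ 2 * (feat x ⬝ᵥ (Q⁻¹ *ᵥ feat x)) ≤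
        feat x ⬝ᵥ (((σ1 ^ 2 / ν1) • Q1⁻¹ + (σ2 ^ 2 / ν2) • Q2⁻¹) *ᵥ feat x))
    ∧ ((π1 = fun _ => σ1 / (σ1 + σ2)) → (π2 = fun _ => σ2 / (σ1 + σ2)) →
      ∀ x ∈ Set.Icc (0 : Fin p → ℝ) 1,
        feat x ⬝ᵥ (((σ1 ^ 2 / ν1) • Q1⁻¹ + (σ2 ^ 2 / ν2) • Q2⁻¹) *ᵥ feat x) =
        (σ1 + σ2) ^ 2 * (feat x ⬝ᵥ (Q⁻¹ *ᵥ feat x))) := by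
  obtain ⟨C, hC⟩ := hf_bdd
  have hC0 : 0 ≤ C := le_trans (hf_nonneg 0) (hC 0)
  set S := Set.Icc (0 : Fin p → ℝ) 1 with hS
  have hSfin : volume S ≠ ⊤ := (isCompact_Icc.measure_lt_top).ne
  -- integrability of the integrands
  have hint : ∀ (i j : Fin (p + 1)) (π : (Fin p → ℝ) → ℝ), Measurable π →
      (∀ x, π x ∈ Set.Icc (0:ℝ) 1) →
      IntegrableOn (fun x => feat x i * feat x j * π x * f x) S := by
    intro i j π hπm hπr
    apply Measure.integrableOn_of_bounded hSfin
    · exact (((feat_measurable i).mul (feat_measurable j)).mul hπm |>.mul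
        hf_meas).aestronglyMeasurable
    · refine (ae_restrict_iff' measurableSet_Icc).mpr (Filter.Eventually.of_forall ?_)
      intro x hx
      have h1 := feat_mem_Icc hx i
      have h2 := feat_mem_Icc hx j
      have h3 := hπr x
      have h4 := hf_nonneg x
      have h5 := hC x
      have hnn : 0 ≤ feat x i * feat x j * π x * f x :=
        mul_nonneg (mul_nonneg (mul_nonneg h1.1 h2.1) h3.1) h4
      rw [Real.norm_eq_abs, abs_of_nonneg hnn]
      calc feat x i * feat x j * π x * f x ≤ 1 * 1 * 1 * C := by
            apply mul_le_mul _ h5 h4 (by norm_num)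
            apply mul_le_mul _ h3.2 h3.1 (by norm_num)
            exact mul_le_mul h1.2 h2.2 h2.1 (by norm_num)
        _ = C := by ring
  -- Q = ν1 • Q1 + ν2 • Q2 entrywise
  have hQsum : ∀ i j, ν1 * Q1 i j + ν2 * Q2 i j = Q i j := by
    intro i j
    rw [hQ1, hQ2, hQ]
    have e1 : ν1 * (1 / ν1 * ∫ x in S, feat x i * feat x j * π1 x * f x)
        = ∫ x in S, feat x i * feat x j * π1 x * f x := by
      field_simp
    have e2 : ν2 * (1 / ν2 * ∫ x in S, feat x i * feat x j * π2 x * f x)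
        = ∫ x in S, feat x i * feat x j * π2 x * f x := by
      field_simp
    rw [e1, e2, ← integral_add (hint i j π1 hπ1_meas hπ1_range) (hint i j π2 hπ2_meas hπ2_range)]
    apply integral_congr_ae
    refine Filter.Eventually.of_forall fun x => ?_
    linear_combination feat x i * feat x j * f x * hπ_sum x
  constructor
  · -- the inequality
    intro x hx
    set v := feat x with hv
    have hv0 : v ≠ 0 := by
      intro h
      have : v 0 = 1 := by simp [hv, feat]
      rw [h] at this; simp at this
    have hdet : IsUnit Q.det := isUnit_iff_ne_zero.mpr hQ_pos.det_pos.ne'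
    set w := Q⁻¹ *ᵥ v with hw
    have hQw : Q *ᵥ w = v := by
      rw [hw, mulVec_mulVec, Matrix.mul_nonsing_inv Q hdet, one_mulVec]
    have hw0 : w ≠ 0 := by
      intro h
      apply hv0
      rw [← hQw, h, mulVec_zero]
    -- the quantities
    set c1 := w ⬝ᵥ Q1 *ᵥ w with hc1
    set c2 := w ⬝ᵥ Q2 *ᵥ w with hc2
    have hc1p : 0 < c1 := by have := hQ1_pos.dotProduct_mulVec_pos hw0; rw [star_trivial] at this; exact this
    have hc2p : 0 < c2 := by have := hQ2_pos.dotProduct_mulVec_pos hw0; rw [star_trivial] at this; exact this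
    have hwv : w ⬝ᵥ v = ν1 * c1 + ν2 * c2 := by
      have : Q = ν1 • Q1 + ν2 • Q2 := by
        ext i j
        simp [← hQsum i j]
      calc w ⬝ᵥ v = w ⬝ᵥ Q *ᵥ w := by rw [hQw]
        _ = ν1 * c1 + ν2 * c2 := by
            rw [this]
            simp [add_mulVec, smul_mulVec, dotProduct_add, hc1, hc2]
    have hvQ : v ⬝ᵥ Q⁻¹ *ᵥ v = ν1 * c1 + ν2 * c2 := by
      rw [← hwv, ← hw, dotProduct_comm]
    have hcs1 := cs_posdef Q1 hQ1_pos v w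
    have hcs2 := cs_posdef Q2 hQ2_pos v w
    set B1 := v ⬝ᵥ Q1⁻¹ *ᵥ v with hB1
    set B2 := v ⬝ᵥ Q2⁻¹ *ᵥ v with hB2
    have hrhs : v ⬝ᵥ (((σ1 ^ 2 / ν1) • Q1⁻¹ + (σ2 ^ 2 / ν2) • Q2⁻¹) *ᵥ v)
        = (σ1 ^ 2 / ν1) * B1 + (σ2 ^ 2 / ν2) * B2 := by
      simp [add_mulVec, smul_mulVec, dotProduct_add, hB1, hB2]
    rw [hvQ, hrhs]
    -- apply the scalar key lemma with a_k = ν_k c_k, B_k' = B_k / ν_k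
    have hk := key_scalar σ1 σ2 (ν1 * c1) (ν2 * c2) (B1 / ν1) (B2 / ν2)
      hσ1 hσ2 (mul_pos hν1_pos hc1p) (mul_pos hν2_pos hc2p) ?_ ?_
    · calc (σ1 + σ2) ^ 2 * (ν1 * c1 + ν2 * c2)
          ≤ σ1 ^ 2 * (B1 / ν1) + σ2 ^ 2 * (B2 / ν2) := hk
        _ = σ1 ^ 2 / ν1 * B1 + σ2 ^ 2 / ν2 * B2 := by ring
    · have : (w ⬝ᵥ v) ^ 2 ≤ c1 * B1 := hcs1
      rw [hwv] at this
      calc (ν1 * c1 + ν2 * c2) ^ 2 ≤ c1 * B1 := this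
        _ = ν1 * c1 * (B1 / ν1) := by field_simp
    · have : (w ⬝ᵥ v) ^ 2 ≤ c2 * B2 := hcs2
      rw [hwv] at this
      calc (ν1 * c1 + ν2 * c2) ^ 2 ≤ c2 * B2 := this
        _ = ν2 * c2 * (B2 / ν2) := by field_simp
  · -- equality for the constant allocation
    intro h1 h2 x hx
    have hσs : (0:ℝ) < σ1 + σ2 := by linarith
    have hν1' : ν1 = σ1 / (σ1 + σ2) := by
      rw [hν1, h1]
      simp only [integral_const_mul, hf_density, mul_one]
    have hν2' : ν2 = σ2 / (σ1 + σ2) := by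
      rw [hν2, h2]
      simp only [integral_const_mul, hf_density, mul_one]
    have hQ1Q : Q1 = Q := by
      ext i j
      rw [hQ1, hQ, h1]
      have : (fun y => feat y i * feat y j * (σ1 / (σ1 + σ2)) * f y)
          = fun y => (σ1 / (σ1 + σ2)) * (feat y i * feat y j * f y) := by
        funext y; ring
      rw [this, integral_const_mul, hν1']
      field_simp
    have hQ2Q : Q2 = Q := by
      ext i j
      rw [hQ2, hQ, h2]
      have : (fun y => feat y i * feat y j * (σ2 / (σ1 + σ2)) * f y)
          = fun y => (σ2 / (σ1 + σ2)) * (feat y i * feat y j * f y) := by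
        funext y; ring
      rw [this, integral_const_mul, hν2']
      field_simp
    rw [hQ1Q, hQ2Q, hν1', hν2']
    simp only [add_mulVec, smul_mulVec, dotProduct_add, dotProduct_smul, smul_eq_mul]
    have e1 : σ1 ^ 2 / (σ1 / (σ1 + σ2)) = σ1 * (σ1 + σ2) := by
      field_simp
    have e2 : σ2 ^ 2 / (σ2 / (σ1 + σ2)) = σ2 * (σ1 + σ2) := by
      field_simp
    rw [e1, e2]; ring
end

section
/- Let θ ∈ (0,1] and b > 0, let V : [0,1] → ℝ be continuous with V(x) > 0 for all x, and let f : [0,1] → ℝ be nonnegative, bounded, measurable, and continuous at θ. Then lim_{t→∞} t · ∫₀^θ Φ(−√t · b·(θ−x)/√V(x)) · b·(θ−x) · f(x) dx = f(θ)·V(θ)/(4b). -/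
open MeasureTheory Filter Set

noncomputable def stdNormalCDF (x : ℝ) : ℝ :=
  ∫ t in Set.Iic x, Real.exp (-t ^ 2 / 2) / Real.sqrt (2 * Real.pi)

noncomputable def gauss (x : ℝ) : ℝ := Real.exp (-x ^ 2 / 2) / Real.sqrt (2 * Real.pi)

lemma gauss_eq (x : ℝ) : gauss x = Real.exp (-(1/2) * x ^ 2) / Real.sqrt (2 * Real.pi) := by
  rw [gauss]; ring_nf

lemma gauss_pos (x : ℝ) : 0 < gauss x :=
  div_pos (Real.exp_pos _) (Real.sqrt_pos.2 (by positivity))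

lemma gauss_cont : Continuous gauss := by
  unfold gauss; fun_prop

lemma gauss_integrable : Integrable gauss := by
  simp only [funext gauss_eq, div_eq_mul_inv]
  exact (integrable_exp_neg_mul_sq (by norm_num : (0:ℝ) < 1/2)).mul_const _

lemma gauss_integral : ∫ x, gauss x = 1 := by
  simp only [funext gauss_eq, div_eq_mul_inv]
  rw [integral_mul_const, integral_gaussian, show Real.pi / (1*2⁻¹) = 2 * Real.pi by ring,
    mul_inv_cancel₀ (by positivity)]

lemma stdNormalCDF_eq (x : ℝ) : stdNormalCDF x = ∫ t in Iic x, gauss t := rfl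

lemma gauss_neg (x : ℝ) : gauss (-x) = gauss x := by simp [gauss]

lemma stdNormalCDF_neg (x : ℝ) : stdNormalCDF (-x) = ∫ t in Ioi x, gauss t := by
  rw [stdNormalCDF_eq, ← integral_comp_neg_Ioi]
  simp [gauss_neg]

lemma stdNormalCDF_nonneg (x : ℝ) : 0 ≤ stdNormalCDF x :=
  setIntegral_nonneg measurableSet_Iic fun t _ => (gauss_pos t).le

lemma stdNormalCDF_add (x y : ℝ) (h : x ≤ y) :
    stdNormalCDF y = stdNormalCDF x + ∫ t in x..y, gauss t := by
  rw [stdNormalCDF_eq, stdNormalCDF_eq,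
    intervalIntegral.integral_Iic_sub_Iic (gauss_integrable.integrableOn)
      (gauss_integrable.integrableOn) |>.symm]
  ring

lemma stdNormalCDF_mono : Monotone stdNormalCDF := by
  intro x y h
  rw [stdNormalCDF_add x y h]
  have : 0 ≤ ∫ t in x..y, gauss t :=
    intervalIntegral.integral_nonneg h fun t _ => (gauss_pos t).le
  linarith

lemma hasDerivAt_stdNormalCDF (x : ℝ) : HasDerivAt stdNormalCDF (gauss x) x := by
  have h0 : ∀ y, stdNormalCDF y = stdNormalCDF 0 + ∫ t in (0:ℝ)..y, gauss t := by
    intro y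
    rcases le_total 0 y with h | h
    · exact stdNormalCDF_add 0 y h
    · rw [stdNormalCDF_add y 0 h, intervalIntegral.integral_symm y 0]; ring
  have : HasDerivAt (fun y => stdNormalCDF 0 + ∫ t in (0:ℝ)..y, gauss t) (gauss x) x := by
    refine HasDerivAt.const_add _ ?_
    exact intervalIntegral.integral_hasDerivAt_right
      gauss_integrable.intervalIntegrable
      (gauss_cont.stronglyMeasurableAtFilter _ _)
      gauss_cont.continuousAt
  exact this.congr_of_eventuallyEq (Eventually.of_forall fun y => (h0 y))

lemma stdNormalCDF_continuous : Continuous stdNormalCDF :=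
  continuous_iff_continuousAt.2 fun x => (hasDerivAt_stdNormalCDF x).continuousAt

lemma stdNormalCDF_tendsto_one : Tendsto stdNormalCDF atTop (nhds 1) := by
  have := (MeasureTheory.aecover_Iic (μ := volume) (l := atTop)
      (tendsto_id (α := ℝ))).integral_tendsto_of_countably_generated gauss_integrable
  rwa [gauss_integral] at this

lemma stdNormalCDF_le_one (x : ℝ) : stdNormalCDF x ≤ 1 := by
  have h := stdNormalCDF_tendsto_one
  have : ∀ᶠ y in atTop, stdNormalCDF x ≤ stdNormalCDF y :=
    eventually_atTop.2 ⟨x, fun y hy => stdNormalCDF_mono hy⟩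
  exact ge_of_tendsto h this

lemma stdNormalCDF_zero : stdNormalCDF 0 = 1/2 := by
  have h1 : (∫ t in Iic (0:ℝ), gauss t) = ∫ t in Ioi (0:ℝ), gauss t := by
    have := integral_comp_neg_Iic (0:ℝ) gauss
    simp only [gauss_neg, neg_zero] at this
    exact this
  have h2 : (∫ t in Iic (0:ℝ), gauss t) + ∫ t in Ioi (0:ℝ), gauss t = 1 := by
    rw [← gauss_integral, ← setIntegral_union (Iic_disjoint_Ioi le_rfl) measurableSet_Ioi
      gauss_integrable.integrableOn gauss_integrable.integrableOn, Iic_union_Ioi,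
      Measure.restrict_univ]
  rw [stdNormalCDF_eq]
  linarith [h1 ▸ h2]

lemma hasDerivAt_gauss (x : ℝ) : HasDerivAt gauss (-x * gauss x) x := by
  have h : HasDerivAt (fun x : ℝ => -x^2/2) (-x) x := by
    have := ((hasDerivAt_pow 2 x).neg).div_const 2
    exact this.congr_deriv (by ring)
  have h2 := (h.exp).div_const (Real.sqrt (2*Real.pi))
  exact h2.congr_deriv (by unfold gauss; ring)

lemma gauss_tendsto_zero : Tendsto gauss atTop (nhds 0) := by
  have hq : Tendsto (fun s : ℝ => s^2/2) atTop atTop :=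
    (tendsto_pow_atTop two_ne_zero).atTop_div_const (by norm_num)
  have := (Real.tendsto_exp_neg_atTop_nhds_zero).comp hq
  have h2 := this.div_const (Real.sqrt (2*Real.pi))
  simp only [zero_div] at h2
  refine h2.congr fun s => ?_
  simp [gauss, Function.comp, neg_div]

lemma sq_mul_gauss_tendsto : Tendsto (fun s : ℝ => s^2 * gauss s) atTop (nhds 0) := by
  have hq : Tendsto (fun s : ℝ => s^2/2) atTop atTop :=
    (tendsto_pow_atTop two_ne_zero).atTop_div_const (by norm_num)
  have h := (Real.tendsto_pow_mul_exp_neg_atTop_nhds_zero 1).comp hq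
  have h2 := (h.div_const (Real.sqrt (2*Real.pi))).const_mul 2
  simp only [mul_zero, zero_div] at h2
  refine h2.congr fun s => ?_
  simp only [Function.comp, pow_one, gauss]
  field_simp

lemma mul_gauss_tendsto : Tendsto (fun s : ℝ => s * gauss s) atTop (nhds 0) := by
  refine squeeze_zero' ?_ ?_ sq_mul_gauss_tendsto
  · filter_upwards [eventually_ge_atTop (0:ℝ)] with s hs
    exact mul_nonneg hs (gauss_pos s).le
  · filter_upwards [eventually_ge_atTop (1:ℝ)] with s hs
    have : s ≤ s^2 := by nlinarith
    exact mul_le_mul_of_nonneg_right this (gauss_pos s).le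

lemma integral_mul_gauss_Ioi (s : ℝ) (hs : 0 ≤ s) :
    IntegrableOn (fun u => u * gauss u) (Ioi s) ∧
    ∫ u in Ioi s, u * gauss u = gauss s := by
  have hderiv : ∀ u ∈ Ioi s, HasDerivAt (fun u => -gauss u) (u * gauss u) u := by
    intro u _
    have := (hasDerivAt_gauss u).neg
    exact this.congr_deriv (by ring)
  have hpos : ∀ u ∈ Ioi s, 0 ≤ u * gauss u := fun u hu =>
    mul_nonneg (hs.trans hu.out.le) (gauss_pos u).le
  have hlim : Tendsto (fun u => -gauss u) atTop (nhds 0) := by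
    simpa using gauss_tendsto_zero.neg
  have hcont : ContinuousWithinAt (fun u => -gauss u) (Ici s) s :=
    (gauss_cont.neg).continuousWithinAt
  refine ⟨integrableOn_Ioi_deriv_of_nonneg hcont hderiv hpos hlim, ?_⟩
  rw [integral_Ioi_of_hasDerivAt_of_nonneg hcont hderiv hpos hlim]
  ring

lemma stdNormalCDF_neg_le_gauss (s : ℝ) (hs : 1 ≤ s) : stdNormalCDF (-s) ≤ gauss s := by
  rw [stdNormalCDF_neg, ← (integral_mul_gauss_Ioi s (by linarith)).2]
  refine setIntegral_mono_on gauss_integrable.integrableOn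
    (integral_mul_gauss_Ioi s (by linarith)).1 measurableSet_Ioi ?_
  intro u hu
  nlinarith [gauss_pos u, hu.out]

lemma sq_mul_cdf_tendsto : Tendsto (fun s : ℝ => s^2 * stdNormalCDF (-s)) atTop (nhds 0) := by
  refine squeeze_zero' ?_ ?_ sq_mul_gauss_tendsto
  · filter_upwards [eventually_ge_atTop (0:ℝ)] with s _
    exact mul_nonneg (sq_nonneg s) (stdNormalCDF_nonneg _)
  · filter_upwards [eventually_ge_atTop (1:ℝ)] with s hs
    exact mul_le_mul_of_nonneg_left (stdNormalCDF_neg_le_gauss s hs) (sq_nonneg s)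

lemma key_integral (c : ℝ) (hc : 0 < c) :
    IntegrableOn (fun s => s * stdNormalCDF (-(c*s))) (Ioi (0:ℝ)) ∧
    ∫ s in Ioi (0:ℝ), s * stdNormalCDF (-(c*s)) = 1/(4*c^2) := by
  set H : ℝ → ℝ := fun s =>
    s^2/2 * stdNormalCDF (-(c*s)) - s * gauss (c*s)/(2*c) + stdNormalCDF (c*s)/(2*c^2) with hH
  have hcs : ∀ s : ℝ, HasDerivAt (fun s : ℝ => c * s) c s := fun s => by
    simpa using (hasDerivAt_id s).const_mul c
  have hΦneg : ∀ s : ℝ, HasDerivAt (fun s => stdNormalCDF (-(c*s))) (-(c * gauss (c*s))) s := by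
    intro s
    have := (hasDerivAt_stdNormalCDF (-(c*s))).comp s ((hcs s).neg)
    exact this.congr_deriv (by rw [gauss_neg]; ring)
  have hgc : ∀ s : ℝ, HasDerivAt (fun s => gauss (c*s)) (-(c*s) * gauss (c*s) * c) s :=
    fun s => (hasDerivAt_gauss (c*s)).comp s (hcs s)
  have hΦpos : ∀ s : ℝ, HasDerivAt (fun s => stdNormalCDF (c*s)) (gauss (c*s) * c) s :=
    fun s => (hasDerivAt_stdNormalCDF (c*s)).comp s (hcs s)
  have hderiv : ∀ s : ℝ, HasDerivAt H (s * stdNormalCDF (-(c*s))) s := by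
    intro s
    have h1 := (((hasDerivAt_pow 2 s).div_const 2).mul (hΦneg s)).sub
      (((hasDerivAt_id s).mul (hgc s)).div_const (2*c))
    have h2 := h1.add ((hΦpos s).div_const (2*c^2))
    exact h2.congr_deriv (by simp only [id]; field_simp; ring)
  have hlim : Tendsto H atTop (nhds (1/(2*c^2))) := by
    have hca : Tendsto (fun s : ℝ => c * s) atTop atTop :=
      Tendsto.const_mul_atTop hc tendsto_id
    have t1 : Tendsto (fun s : ℝ => s^2/2 * stdNormalCDF (-(c*s))) atTop (nhds 0) := by
      have := (sq_mul_cdf_tendsto.comp hca).div_const (2*c^2)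
      simp only [zero_div] at this
      refine this.congr fun s => ?_
      simp only [Function.comp]
      field_simp
    have t2 : Tendsto (fun s : ℝ => s * gauss (c*s)/(2*c)) atTop (nhds 0) := by
      have := (mul_gauss_tendsto.comp hca).div_const (2*c^2)
      simp only [zero_div] at this
      refine this.congr fun s => ?_
      simp only [Function.comp]
      field_simp
    have t3 : Tendsto (fun s : ℝ => stdNormalCDF (c*s)/(2*c^2)) atTop (nhds (1/(2*c^2))) :=
      (stdNormalCDF_tendsto_one.comp hca).div_const (2*c^2)
    have := (t1.sub t2).add t3
    simpa using this
  have hH0 : H 0 = 1/(4*c^2) := by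
    simp only [hH]
    rw [mul_zero, neg_zero, stdNormalCDF_zero]
    push_cast
    field_simp
    ring
  have hpos : ∀ s ∈ Ioi (0:ℝ), 0 ≤ s * stdNormalCDF (-(c*s)) := fun s hs =>
    mul_nonneg hs.out.le (stdNormalCDF_nonneg _)
  have hcont : ContinuousWithinAt H (Ici 0) 0 := (hderiv 0).continuousAt.continuousWithinAt
  refine ⟨integrableOn_Ioi_deriv_of_nonneg hcont (fun s _ => hderiv s) hpos hlim, ?_⟩
  rw [integral_Ioi_of_hasDerivAt_of_nonneg hcont (fun s _ => hderiv s) hpos hlim, hH0]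
  field_simp
  ring

/-- `lim_{t→∞} t ∫₀^θ Φ(−√t b(θ−x)/√V(x)) b(θ−x) f(x) dx = f(θ)V(θ)/(4b)`. -/
theorem regret_half_limit
    (θ b : ℝ) (hθ : θ ∈ Set.Ioc (0 : ℝ) 1) (hb : 0 < b)
    (V f : ℝ → ℝ)
    (hV_cont : ContinuousOn V (Set.Icc 0 1))
    (hV_pos : ∀ x ∈ Set.Icc (0 : ℝ) 1, 0 < V x)
    (hf_nonneg : ∀ x ∈ Set.Icc (0 : ℝ) 1, 0 ≤ f x)
    (hf_bdd : ∃ C, ∀ x ∈ Set.Icc (0 : ℝ) 1, f x ≤ C)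
    (hf_meas : Measurable f)
    (hf_cont : ContinuousWithinAt f (Set.Icc 0 1) θ) :
    Tendsto (fun t : ℝ => t * ∫ x in (0 : ℝ)..θ,
        stdNormalCDF (-(Real.sqrt t * (b * (θ - x))) / Real.sqrt (V x)) *
          (b * (θ - x)) * f x)
      atTop (nhds (f θ * V θ / (4 * b))) := by
  obtain ⟨hθ0, hθ1⟩ := hθ
  obtain ⟨C, hC⟩ := hf_bdd
  have hθmem : θ ∈ Icc (0:ℝ) 1 := ⟨hθ0.le, hθ1⟩
  have hC0 : 0 ≤ C := (hf_nonneg θ hθmem).trans (hC θ hθmem)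
  -- max of V
  obtain ⟨x₀, hx₀, hmax⟩ := isCompact_Icc.exists_isMaxOn (nonempty_Icc.2 zero_le_one) hV_cont
  set M := V x₀ with hM
  have hM0 : 0 < M := hV_pos x₀ hx₀
  have hMle : ∀ x ∈ Icc (0:ℝ) 1, V x ≤ M := fun x hx => hmax hx
  have hVθ : 0 < V θ := hV_pos θ hθmem
  set c₀ : ℝ := b / Real.sqrt M with hc₀def
  have hc₀ : 0 < c₀ := div_pos hb (Real.sqrt_pos.2 hM0)
  set cθ : ℝ := b / Real.sqrt (V θ) with hcθdef
  have hcθ : 0 < cθ := div_pos hb (Real.sqrt_pos.2 hVθ)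
  -- the rescaled integrand
  set F : ℝ → ℝ → ℝ := fun t s => Set.indicator (Ioc 0 (Real.sqrt t * θ))
    (fun s => stdNormalCDF (-(b*s) / Real.sqrt (V (θ - s / Real.sqrt t))) * (b*s) *
      f (θ - s / Real.sqrt t)) s with hF
  set L : ℝ → ℝ := fun s => stdNormalCDF (-(b*s) / Real.sqrt (V θ)) * (b*s) * f θ with hL
  -- step 1: identity
  have step1 : ∀ t : ℝ, 1 ≤ t →
      t * (∫ x in (0:ℝ)..θ, stdNormalCDF (-(Real.sqrt t * (b * (θ - x))) / Real.sqrt (V x)) *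
        (b * (θ - x)) * f x) = ∫ s in Ioi (0:ℝ), F t s := by
    intro t ht
    set r := Real.sqrt t with hr
    have hr0 : 0 < r := Real.sqrt_pos.2 (by linarith)
    have hrt : r * r = t := Real.mul_self_sqrt (by linarith)
    set G : ℝ → ℝ := fun s => stdNormalCDF (-(b*s) / Real.sqrt (V (θ - s/r))) *
      (b*(s/r)) * f (θ - s/r) with hG
    have hGx : ∀ x : ℝ, stdNormalCDF (-(r * (b * (θ - x))) / Real.sqrt (V x)) *
        (b * (θ - x)) * f x = G (r * (θ - x)) := by
      intro x
      have h1 : θ - r * (θ - x) / r = x := by field_simp; ring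
      rw [hG]
      simp only [h1]
      have h2 : b * (r * (θ - x) / r) = b * (θ - x) := by field_simp
      have h3 : -(b * (r * (θ - x))) = -(r * (b * (θ - x))) := by ring
      rw [h2, h3]
    calc t * (∫ x in (0:ℝ)..θ, stdNormalCDF (-(r * (b * (θ - x))) / Real.sqrt (V x)) *
          (b * (θ - x)) * f x)
        = t * ∫ x in (0:ℝ)..θ, G (r * (θ - x)) := by
          congr 1
          exact intervalIntegral.integral_congr fun x _ => hGx x
      _ = t * ∫ y in (0:ℝ)..θ, G (r * y) := by
          rw [show (∫ x in (0:ℝ)..θ, G (r * (θ - x))) =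
            ∫ x in (0:ℝ)..θ, (fun y => G (r * y)) (θ - x) from rfl,
            intervalIntegral.integral_comp_sub_left (fun y => G (r * y)) θ]
          norm_num
      _ = t * (r⁻¹ • ∫ s in (0:ℝ)..(r*θ), G s) := by
          rw [intervalIntegral.integral_comp_mul_left G hr0.ne']
          norm_num
      _ = ∫ s in (0:ℝ)..(r*θ), r * G s := by
          rw [intervalIntegral.integral_const_mul, smul_eq_mul]
          have htr : t * r⁻¹ = r := by rw [← hrt]; field_simp
          rw [← mul_assoc, htr]
      _ = ∫ s in (0:ℝ)..(r*θ), stdNormalCDF (-(b*s) / Real.sqrt (V (θ - s/r))) * (b*s) *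
            f (θ - s/r) := by
          refine intervalIntegral.integral_congr fun s _ => ?_
          rw [hG]
          field_simp
      _ = ∫ s in Ioc (0:ℝ) (r*θ), stdNormalCDF (-(b*s) / Real.sqrt (V (θ - s/r))) * (b*s) *
            f (θ - s/r) := intervalIntegral.integral_of_le (by positivity)
      _ = ∫ s in Ioi (0:ℝ), F t s := by
          rw [hF]
          rw [MeasureTheory.integral_indicator measurableSet_Ioc,
            Measure.restrict_restrict measurableSet_Ioc,
            inter_eq_left.2 (Ioc_subset_Ioi_self : Ioc (0:ℝ) (r*θ) ⊆ Ioi 0)]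
  -- step 2: dominated convergence
  have step2 : Tendsto (fun t => ∫ s in Ioi (0:ℝ), F t s) atTop
      (nhds (∫ s in Ioi (0:ℝ), L s)) := by
    have hsqrt : Tendsto Real.sqrt atTop atTop := by
      apply tendsto_atTop_atTop_of_monotone (fun a b h => Real.sqrt_le_sqrt h)
      intro B
      exact ⟨(max 0 B)^2, by rw [Real.sqrt_sq (le_max_left 0 B)]; exact le_max_right _ _⟩
    have hmaps : ∀ t : ℝ, 1 ≤ t → ∀ s ∈ Ioc (0:ℝ) (Real.sqrt t * θ),
        θ - s / Real.sqrt t ∈ Icc (0:ℝ) 1 := by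
      intro t ht s hs
      have hr0 : 0 < Real.sqrt t := Real.sqrt_pos.2 (by linarith)
      have h1 : s / Real.sqrt t ≤ θ := (div_le_iff₀ hr0).2 (by linarith [hs.2, mul_comm θ (Real.sqrt t)])
      have h2 : 0 < s / Real.sqrt t := div_pos hs.1 hr0
      exact ⟨by linarith, by linarith⟩
    refine MeasureTheory.tendsto_integral_filter_of_dominated_convergence
      (fun s => (C * b) * (s * stdNormalCDF (-(c₀ * s)))) ?_ ?_ ?_ ?_
    · -- measurability
      filter_upwards [eventually_ge_atTop (1:ℝ)] with t ht
      have hr0 : 0 < Real.sqrt t := Real.sqrt_pos.2 (by linarith)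
      have hcψ : Continuous (fun s : ℝ => θ - s / Real.sqrt t) :=
        continuous_const.sub (continuous_id.div_const _)
      have hVψ : AEMeasurable (fun s => V (θ - s / Real.sqrt t))
          (volume.restrict (Ioc 0 (Real.sqrt t * θ))) :=
        (hV_cont.comp hcψ.continuousOn (hmaps t ht)).aemeasurable measurableSet_Ioc
      have h1 : AEMeasurable (fun s => Real.sqrt (V (θ - s / Real.sqrt t)))
          (volume.restrict (Ioc 0 (Real.sqrt t * θ))) :=
        Real.continuous_sqrt.measurable.comp_aemeasurable hVψ
      have h2 : AEMeasurable (fun s : ℝ => -(b*s))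
          (volume.restrict (Ioc 0 (Real.sqrt t * θ))) :=
        ((measurable_id.const_mul b).neg).aemeasurable
      have hΦ : AEStronglyMeasurable
          (fun s => stdNormalCDF (-(b*s) / Real.sqrt (V (θ - s / Real.sqrt t))))
          (volume.restrict (Ioc 0 (Real.sqrt t * θ))) :=
        (stdNormalCDF_continuous.measurable.comp_aemeasurable (h2.div h1)).aestronglyMeasurable
      have hbs : AEStronglyMeasurable (fun s : ℝ => b*s)
          (volume.restrict (Ioc 0 (Real.sqrt t * θ))) :=
        (measurable_id.const_mul b).aestronglyMeasurable
      have hfψ : AEStronglyMeasurable (fun s => f (θ - s / Real.sqrt t))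
          (volume.restrict (Ioc 0 (Real.sqrt t * θ))) :=
        (hf_meas.comp hcψ.measurable).aestronglyMeasurable
      have hg := (hΦ.mul hbs).mul hfψ
      rw [hF]
      exact ((aestronglyMeasurable_indicator_iff measurableSet_Ioc).2 hg).restrict
    · -- domination
      filter_upwards [eventually_ge_atTop (1:ℝ)] with t ht
      filter_upwards [ae_restrict_mem measurableSet_Ioi] with s hs
      have hs0 : 0 < s := hs
      by_cases hmem : s ∈ Ioc (0:ℝ) (Real.sqrt t * θ)
      · rw [hF]
        simp only [indicator_of_mem hmem]
        set x := θ - s / Real.sqrt t with hx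
        have hxmem : x ∈ Icc (0:ℝ) 1 := hmaps t ht s hmem
        have hVx : 0 < V x := hV_pos x hxmem
        have hΦ2 : (0:ℝ) ≤ stdNormalCDF (-(c₀*s)) := stdNormalCDF_nonneg _
        have hbs : 0 ≤ b * s := by positivity
        have hΦle : stdNormalCDF (-(b*s) / Real.sqrt (V x)) ≤ stdNormalCDF (-(c₀*s)) := by
          apply stdNormalCDF_mono
          have h1 : b * s / Real.sqrt M ≤ b * s / Real.sqrt (V x) :=
            div_le_div_of_nonneg_left hbs (Real.sqrt_pos.2 hVx)
              (Real.sqrt_le_sqrt (hMle x hxmem))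
          have h2 : c₀ * s = b * s / Real.sqrt M := by rw [hc₀def]; ring
          rw [neg_div, h2]
          linarith
        have hfx0 : 0 ≤ f x := hf_nonneg x hxmem
        have hfxC : f x ≤ C := hC x hxmem
        rw [Real.norm_eq_abs, abs_of_nonneg (mul_nonneg (mul_nonneg (stdNormalCDF_nonneg _) hbs) hfx0)]
        calc stdNormalCDF (-(b*s) / Real.sqrt (V x)) * (b*s) * f x
            ≤ stdNormalCDF (-(c₀*s)) * (b*s) * f x := by
              apply mul_le_mul_of_nonneg_right _ hfx0
              exact mul_le_mul_of_nonneg_right hΦle hbs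
          _ ≤ stdNormalCDF (-(c₀*s)) * (b*s) * C := by
              apply mul_le_mul_of_nonneg_left hfxC
              exact mul_nonneg hΦ2 hbs
          _ = (C * b) * (s * stdNormalCDF (-(c₀*s))) := by ring
      · rw [hF]
        simp only [indicator_of_notMem hmem]
        rw [norm_zero]
        have := stdNormalCDF_nonneg (-(c₀*s))
        have : 0 ≤ s * stdNormalCDF (-(c₀*s)) := mul_nonneg hs0.le this
        positivity
    · -- bound integrable
      exact ((key_integral c₀ hc₀).1.const_mul (C*b))
    · -- pointwise limit
      filter_upwards [ae_restrict_mem measurableSet_Ioi] with s hs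
      have hs0 : 0 < s := hs
      have hst : Tendsto (fun t : ℝ => Real.sqrt t * θ) atTop atTop :=
        hsqrt.atTop_mul_const hθ0
      have hdiv : Tendsto (fun t : ℝ => s / Real.sqrt t) atTop (nhds 0) :=
        tendsto_const_nhds.div_atTop hsqrt
      have hψt : Tendsto (fun t : ℝ => θ - s / Real.sqrt t) atTop (nhds θ) := by
        have := hdiv.const_sub θ
        simpa using this
      have hev : ∀ᶠ t : ℝ in atTop, s ∈ Ioc (0:ℝ) (Real.sqrt t * θ) ∧ 1 ≤ t := by
        filter_upwards [hst.eventually_ge_atTop s, eventually_ge_atTop (1:ℝ)] with t h1 h2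
        exact ⟨⟨hs0, h1⟩, h2⟩
      have hmem' : ∀ᶠ t : ℝ in atTop, θ - s / Real.sqrt t ∈ Icc (0:ℝ) 1 := by
        filter_upwards [hev] with t ⟨h1, h2⟩
        exact hmaps t h2 s h1
      have htend : Tendsto (fun t : ℝ => θ - s / Real.sqrt t) atTop
          (nhdsWithin θ (Icc (0:ℝ) 1)) := tendsto_nhdsWithin_iff.2 ⟨hψt, hmem'⟩
      have hVt : Tendsto (fun t : ℝ => V (θ - s / Real.sqrt t)) atTop (nhds (V θ)) :=
        Filter.Tendsto.comp (hV_cont θ hθmem) htend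
      have hft : Tendsto (fun t : ℝ => f (θ - s / Real.sqrt t)) atTop (nhds (f θ)) :=
        Filter.Tendsto.comp hf_cont htend
      have harg : Tendsto (fun t : ℝ => -(b*s) / Real.sqrt (V (θ - s / Real.sqrt t)))
          atTop (nhds (-(b*s) / Real.sqrt (V θ))) := by
        refine tendsto_const_nhds.div ((Real.continuous_sqrt.tendsto _).comp hVt) ?_
        exact (Real.sqrt_pos.2 hVθ).ne'
      have hΦt := (stdNormalCDF_continuous.tendsto _).comp harg
      have hmain : Tendsto (fun t : ℝ =>
          stdNormalCDF (-(b*s) / Real.sqrt (V (θ - s / Real.sqrt t))) * (b*s) *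
            f (θ - s / Real.sqrt t)) atTop (nhds (L s)) := by
        rw [hL]
        exact (hΦt.mul_const (b*s)).mul hft
      refine hmain.congr' ?_
      filter_upwards [hev] with t ⟨h1, _⟩
      rw [hF]
      simp only [indicator_of_mem h1]
  -- value of limit integral
  have step3 : (∫ s in Ioi (0:ℝ), L s) = f θ * V θ / (4 * b) := by
    have harg : ∀ s : ℝ, -(b*s) / Real.sqrt (V θ) = -(cθ*s) := by
      intro s
      rw [hcθdef, neg_div, div_mul_eq_mul_div]
    have : ∀ s : ℝ, L s = (b * f θ) * (s * stdNormalCDF (-(cθ*s))) := by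
      intro s; rw [hL]; simp only [harg s]; ring
    rw [funext this, integral_const_mul, (key_integral cθ hcθ).2]
    have hsq : Real.sqrt (V θ) ^ 2 = V θ := Real.sq_sqrt hVθ.le
    rw [hcθdef]
    field_simp
    rw [hsq]
  rw [← step3]
  refine step2.congr' ?_
  filter_upwards [eventually_ge_atTop (1:ℝ)] with t ht
  exact (step1 t ht).symm
end

section
/- For every x ∈ [0,1] one has V_π(x) ≥ (σ₁+σ₂)² · h(x)ᵀ Q⁻¹ h(x); that is, in the polynomial regression setting, V_π(x) is minimized uniformly in x by the constant allocation π₁(x) ≡ σ₁/(σ₁+σ₂), π₂(x) ≡ σ₂/(σ₁+σ₂), for which V_π(x) = (σ₁+σ₂)² · h(x)ᵀ Q⁻¹ h(x) for all x. -/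
open Matrix MeasureTheory

/-- The polynomial feature map `h(x) = (1, x, x², …, x^J)ᵀ ∈ ℝ^{J+1}`. -/
def polyFeat (J : ℕ) (x : ℝ) : Fin (J + 1) → ℝ := fun j => x ^ (j : ℕ)

lemma transpose_eq_of_herm {n : Type*} [Fintype n] {M : Matrix n n ℝ}
    (hM : M.IsHermitian) : Mᵀ = M := by
  ext i j
  have := congrFun (congrFun hM.eq i) j
  simpa using this

lemma dot_symm {n : Type*} [Fintype n] {M : Matrix n n ℝ} (hM : M.IsHermitian)
    (u v : n → ℝ) : u ⬝ᵥ (M *ᵥ v) = v ⬝ᵥ (M *ᵥ u) := by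
  rw [dotProduct_mulVec, ← mulVec_transpose, transpose_eq_of_herm hM, dotProduct_comm]

lemma psd_cs {n : Type*} [Fintype n] {M : Matrix n n ℝ} (hM : M.PosSemidef)
    (u v : n → ℝ) :
    (u ⬝ᵥ (M *ᵥ v)) ^ 2 ≤ (u ⬝ᵥ (M *ᵥ u)) * (v ⬝ᵥ (M *ᵥ v)) := by
  have key : ∀ t : ℝ, 0 ≤ (v ⬝ᵥ (M *ᵥ v)) * (t * t) +
      (2 * (u ⬝ᵥ (M *ᵥ v))) * t + (u ⬝ᵥ (M *ᵥ u)) := by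
    intro t
    have h0 := hM.dotProduct_mulVec_nonneg (u + t • v)
    simp only [star_trivial, mulVec_add, mulVec_smul, dotProduct_add, add_dotProduct,
      dotProduct_smul, smul_dotProduct, smul_eq_mul, dot_symm hM.1 v u] at h0
    nlinarith [h0]
  have hd := discrim_le_zero key
  rw [discrim] at hd
  nlinarith [hd]

lemma amgm_aux {x y c : ℝ} (hx : 0 ≤ x) (hy : 0 ≤ y) (hc : 0 ≤ c)
    (h : c ^ 2 ≤ x * y) : 2 * c ≤ x + y := by
  nlinarith [sq_nonneg (x - y), sq_nonneg (x + y - 2 * c)]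

lemma scalar_key {σ1 σ2 ν1 ν2 A1 A2 B1 B2 t : ℝ}
    (hσ1 : 0 < σ1) (hσ2 : 0 < σ2) (hν1 : 0 < ν1) (hν2 : 0 < ν2)
    (hA1 : 0 ≤ A1) (hA2 : 0 ≤ A2) (hB1 : 0 ≤ B1) (hB2 : 0 ≤ B2) (ht : 0 ≤ t)
    (hsum : ν1 * A1 + ν2 * A2 = t) (h1 : t ^ 2 ≤ A1 * B1) (h2 : t ^ 2 ≤ A2 * B2) :
    (σ1 + σ2) ^ 2 * t ≤ σ1 ^ 2 / ν1 * B1 + σ2 ^ 2 / ν2 * B2 := by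
  rcases eq_or_lt_of_le ht with h0 | h0
  · rw [← h0]
    simp only [mul_zero]
    positivity
  · set x := σ1 ^ 2 / ν1 * ν2 * A2 * B1 with hxdef
    set y := σ2 ^ 2 / ν2 * ν1 * A1 * B2 with hydef
    have hx : 0 ≤ x := by positivity
    have hy : 0 ≤ y := by positivity
    have hxy : (σ1 * σ2 * t ^ 2) ^ 2 ≤ x * y := by
      have he : x * y = σ1 ^ 2 * σ2 ^ 2 * ((A1 * B1) * (A2 * B2)) := by
        rw [hxdef, hydef]; field_simp
      rw [he]
      have h4 : t ^ 2 * t ^ 2 ≤ (A1 * B1) * (A2 * B2) :=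
        mul_le_mul h1 h2 (by positivity) (by nlinarith)
      calc (σ1 * σ2 * t ^ 2) ^ 2 = σ1 ^ 2 * σ2 ^ 2 * (t ^ 2 * t ^ 2) := by ring
        _ ≤ σ1 ^ 2 * σ2 ^ 2 * ((A1 * B1) * (A2 * B2)) :=
            mul_le_mul_of_nonneg_left h4 (by positivity)
    have cross := amgm_aux hx hy (by positivity) hxy
    have expand : (σ1 ^ 2 / ν1 * B1 + σ2 ^ 2 / ν2 * B2) * (ν1 * A1 + ν2 * A2)
        = σ1 ^ 2 * (A1 * B1) + σ2 ^ 2 * (A2 * B2) + (x + y) := by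
      rw [hxdef, hydef]; field_simp; ring
    have expand' : (σ1 ^ 2 / ν1 * B1 + σ2 ^ 2 / ν2 * B2) * t
        = σ1 ^ 2 * (A1 * B1) + σ2 ^ 2 * (A2 * B2) + (x + y) := by
      rw [← hsum]; exact expand
    have main : (σ1 + σ2) ^ 2 * t * t ≤ (σ1 ^ 2 / ν1 * B1 + σ2 ^ 2 / ν2 * B2) * t := by
      rw [expand']
      nlinarith [mul_le_mul_of_nonneg_left h1 (by positivity : (0:ℝ) ≤ σ1 ^ 2),
        mul_le_mul_of_nonneg_left h2 (by positivity : (0:ℝ) ≤ σ2 ^ 2), cross]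
    exact le_of_mul_le_mul_right main h0

lemma integ_aux (J : ℕ) (i j : Fin (J + 1)) (g f : ℝ → ℝ) (hg : Measurable g)
    (hgr : ∀ x, g x ∈ Set.Icc (0:ℝ) 1) (hf : Measurable f) (hfn : ∀ x, 0 ≤ f x)
    {C : ℝ} (hC : ∀ x, f x ≤ C) :
    IntegrableOn (fun x => polyFeat J x i * polyFeat J x j * g x * f x)
      (Set.Icc (0:ℝ) 1) := by
  apply Measure.integrableOn_of_bounded (M := C)
  · rw [Real.volume_Icc]; exact ENNReal.ofReal_ne_top
  · refine Measurable.aestronglyMeasurable ?_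
    unfold polyFeat
    exact (((measurable_id.pow_const _).mul (measurable_id.pow_const _)).mul hg).mul hf
  · rw [ae_restrict_iff' measurableSet_Icc]
    refine Filter.Eventually.of_forall fun x hx => ?_
    have hx0 := hx.1
    have hx1 := hx.2
    have hpi : (0:ℝ) ≤ polyFeat J x i := pow_nonneg hx0 _
    have hpj : (0:ℝ) ≤ polyFeat J x j := pow_nonneg hx0 _
    have hpi1 : polyFeat J x i ≤ 1 := pow_le_one₀ hx0 hx1
    have hpj1 : polyFeat J x j ≤ 1 := pow_le_one₀ hx0 hx1
    have hnn : 0 ≤ polyFeat J x i * polyFeat J x j * g x * f x :=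
      mul_nonneg (mul_nonneg (mul_nonneg hpi hpj) (hgr x).1) (hfn x)
    rw [Real.norm_eq_abs, abs_of_nonneg hnn]
    have hkey : polyFeat J x i * polyFeat J x j * g x ≤ 1 :=
      mul_le_one₀ (mul_le_one₀ hpi1 hpj (by exact hpj1)) (hgr x).1 (hgr x).2
    calc polyFeat J x i * polyFeat J x j * g x * f x ≤ f x :=
          mul_le_of_le_one_left (hfn x) hkey
      _ ≤ C := hC x

/-- In the polynomial regression setting, the variance function
`V_π(x) = h(x)ᵀ(Σ₁+Σ₂)h(x)` satisfies `V_π(x) ≥ (σ₁+σ₂)² h(x)ᵀ Q⁻¹ h(x)` for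
every `x ∈ [0,1]`, and the constant allocation `π₁ ≡ σ₁/(σ₁+σ₂)`,
`π₂ ≡ σ₂/(σ₁+σ₂)` attains this bound uniformly in `x`. -/
theorem variance_uniformly_minimized_poly
    (J : ℕ) (hJ : 1 ≤ J)
    (f π1 π2 : ℝ → ℝ) (σ1 σ2 : ℝ)
    (hσ1 : 0 < σ1) (hσ2 : 0 < σ2)
    (hf_meas : Measurable f) (hf_nonneg : ∀ x, 0 ≤ f x)
    (hf_bdd : ∃ C, ∀ x, f x ≤ C)
    (hf_density : ∫ x in Set.Icc (0 : ℝ) 1, f x = 1)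
    (hπ1_meas : Measurable π1) (hπ2_meas : Measurable π2)
    (hπ1_range : ∀ x, π1 x ∈ Set.Icc (0 : ℝ) 1)
    (hπ2_range : ∀ x, π2 x ∈ Set.Icc (0 : ℝ) 1)
    (hπ_sum : ∀ x, π1 x + π2 x = 1)
    (ν1 ν2 : ℝ)
    (hν1 : ν1 = ∫ x in Set.Icc (0 : ℝ) 1, π1 x * f x)
    (hν2 : ν2 = ∫ x in Set.Icc (0 : ℝ) 1, π2 x * f x)
    (hν1_pos : 0 < ν1) (hν2_pos : 0 < ν2)
    (Q1 Q2 Q : Matrix (Fin (J + 1)) (Fin (J + 1)) ℝ)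
    (hQ1 : ∀ i j, Q1 i j =
      (1 / ν1) * ∫ x in Set.Icc (0 : ℝ) 1,
        polyFeat J x i * polyFeat J x j * π1 x * f x)
    (hQ2 : ∀ i j, Q2 i j =
      (1 / ν2) * ∫ x in Set.Icc (0 : ℝ) 1,
        polyFeat J x i * polyFeat J x j * π2 x * f x)
    (hQ : ∀ i j, Q i j =
      ∫ x in Set.Icc (0 : ℝ) 1, polyFeat J x i * polyFeat J x j * f x)
    (hQ1_pos : Q1.PosDef) (hQ2_pos : Q2.PosDef) (hQ_pos : Q.PosDef) :
    (∀ x ∈ Set.Icc (0 : ℝ) 1,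
      (σ1 + σ2) ^ 2 * (polyFeat J x ⬝ᵥ (Q⁻¹ *ᵥ polyFeat J x)) ≤
        polyFeat J x ⬝ᵥ
          (((σ1 ^ 2 / ν1) • Q1⁻¹ + (σ2 ^ 2 / ν2) • Q2⁻¹) *ᵥ polyFeat J x))
    ∧ ((π1 = fun _ => σ1 / (σ1 + σ2)) → (π2 = fun _ => σ2 / (σ1 + σ2)) →
      ∀ x ∈ Set.Icc (0 : ℝ) 1,
        polyFeat J x ⬝ᵥ
          (((σ1 ^ 2 / ν1) • Q1⁻¹ + (σ2 ^ 2 / ν2) • Q2⁻¹) *ᵥ polyFeat J x) =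
        (σ1 + σ2) ^ 2 * (polyFeat J x ⬝ᵥ (Q⁻¹ *ᵥ polyFeat J x))) := by
  obtain ⟨C, hC⟩ := hf_bdd
  -- the key moment identity ν1 • Q1 + ν2 • Q2 = Q
  have hQsum : ν1 • Q1 + ν2 • Q2 = Q := by
    ext i j
    have int1 := integ_aux J i j π1 f hπ1_meas hπ1_range hf_meas hf_nonneg hC
    have int2 := integ_aux J i j π2 f hπ2_meas hπ2_range hf_meas hf_nonneg hC
    have hadd : (∫ x in Set.Icc (0:ℝ) 1, polyFeat J x i * polyFeat J x j * π1 x * f x)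
        + (∫ x in Set.Icc (0:ℝ) 1, polyFeat J x i * polyFeat J x j * π2 x * f x)
        = ∫ x in Set.Icc (0:ℝ) 1, polyFeat J x i * polyFeat J x j * f x := by
      rw [← integral_add int1 int2]
      refine integral_congr_ae (Filter.Eventually.of_forall fun x => ?_)
      have := hπ_sum x
      simp only
      linear_combination (polyFeat J x i * polyFeat J x j * f x) * this
    simp only [Matrix.add_apply, Matrix.smul_apply, smul_eq_mul]
    rw [hQ1, hQ2, hQ]
    field_simp
    linarith [hadd]
  constructor
  · -- the inequality
    intro x hx
    have hQdet : IsUnit Q.det := hQ_pos.det_pos.ne'.isUnit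
    have hQ1det : IsUnit Q1.det := hQ1_pos.det_pos.ne'.isUnit
    have hQ2det : IsUnit Q2.det := hQ2_pos.det_pos.ne'.isUnit
    set hv := polyFeat J x with hvdef
    set u := Q⁻¹ *ᵥ hv with hudef
    set v1 := Q1⁻¹ *ᵥ hv with hv1def
    set v2 := Q2⁻¹ *ᵥ hv with hv2def
    set A1 := u ⬝ᵥ (Q1 *ᵥ u) with hA1def
    set A2 := u ⬝ᵥ (Q2 *ᵥ u) with hA2def
    set B1 := hv ⬝ᵥ (Q1⁻¹ *ᵥ hv) with hB1def
    set B2 := hv ⬝ᵥ (Q2⁻¹ *ᵥ hv) with hB2def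
    set t := hv ⬝ᵥ (Q⁻¹ *ᵥ hv) with htdef
    have hA1 : 0 ≤ A1 := by simpa using hQ1_pos.posSemidef.dotProduct_mulVec_nonneg u
    have hA2 : 0 ≤ A2 := by simpa using hQ2_pos.posSemidef.dotProduct_mulVec_nonneg u
    have hB1 : 0 ≤ B1 := by simpa using hQ1_pos.inv.posSemidef.dotProduct_mulVec_nonneg hv
    have hB2 : 0 ≤ B2 := by simpa using hQ2_pos.inv.posSemidef.dotProduct_mulVec_nonneg hv
    have ht : 0 ≤ t := by simpa using hQ_pos.inv.posSemidef.dotProduct_mulVec_nonneg hv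
    have hQu : Q *ᵥ u = hv := by
      rw [hudef, mulVec_mulVec, Matrix.mul_nonsing_inv _ hQdet, one_mulVec]
    have hut : u ⬝ᵥ hv = t := by
      rw [htdef, hudef, dotProduct_comm]
    have hsum' : ν1 * A1 + ν2 * A2 = t := by
      have e1 : u ⬝ᵥ ((ν1 • Q1 + ν2 • Q2) *ᵥ u) = ν1 * A1 + ν2 * A2 := by
        simp [add_mulVec, smul_mulVec, dotProduct_add, dotProduct_smul, smul_eq_mul, hA1def, hA2def]
      rw [← e1, hQsum, hQu, hut]
    have cs1 : t ^ 2 ≤ A1 * B1 := by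
      have hQ1v : Q1 *ᵥ v1 = hv := by
        rw [hv1def, mulVec_mulVec, Matrix.mul_nonsing_inv _ hQ1det, one_mulVec]
      have := psd_cs hQ1_pos.posSemidef u v1
      rw [hQ1v, hut, dotProduct_comm v1 hv] at this
      exact this
    have cs2 : t ^ 2 ≤ A2 * B2 := by
      have hQ2v : Q2 *ᵥ v2 = hv := by
        rw [hv2def, mulVec_mulVec, Matrix.mul_nonsing_inv _ hQ2det, one_mulVec]
      have := psd_cs hQ2_pos.posSemidef u v2
      rw [hQ2v, hut, dotProduct_comm v2 hv] at this
      exact this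
    have goalRHS : hv ⬝ᵥ (((σ1 ^ 2 / ν1) • Q1⁻¹ + (σ2 ^ 2 / ν2) • Q2⁻¹) *ᵥ hv)
        = σ1 ^ 2 / ν1 * B1 + σ2 ^ 2 / ν2 * B2 := by
      simp [add_mulVec, smul_mulVec, dotProduct_add, dotProduct_smul, smul_eq_mul,
        hB1def, hB2def]
    rw [goalRHS]
    exact scalar_key hσ1 hσ2 hν1_pos hν2_pos hA1 hA2 hB1 hB2 ht hsum' cs1 cs2
  · -- the equality case
    intro hp1 hp2 x hx
    have hs : (0:ℝ) < σ1 + σ2 := by linarith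
    have hc1 : ν1 = σ1 / (σ1 + σ2) := by
      rw [hν1]
      simp only [hp1]
      rw [integral_const_mul, hf_density, mul_one]
    have hc2 : ν2 = σ2 / (σ1 + σ2) := by
      rw [hν2]
      simp only [hp2]
      rw [integral_const_mul, hf_density, mul_one]
    have hQ1Q : Q1 = Q := by
      ext i j
      rw [hQ1, hQ]
      simp only [hp1]
      have e : ∫ x in Set.Icc (0:ℝ) 1,
          polyFeat J x i * polyFeat J x j * (σ1 / (σ1 + σ2)) * f x
          = (σ1 / (σ1 + σ2)) * ∫ x in Set.Icc (0:ℝ) 1,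
              polyFeat J x i * polyFeat J x j * f x := by
        rw [← integral_const_mul]
        exact integral_congr_ae (Filter.Eventually.of_forall fun x => by ring)
      rw [e, hc1]
      field_simp
    have hQ2Q : Q2 = Q := by
      ext i j
      rw [hQ2, hQ]
      simp only [hp2]
      have e : ∫ x in Set.Icc (0:ℝ) 1,
          polyFeat J x i * polyFeat J x j * (σ2 / (σ1 + σ2)) * f x
          = (σ2 / (σ1 + σ2)) * ∫ x in Set.Icc (0:ℝ) 1,
              polyFeat J x i * polyFeat J x j * f x := by
        rw [← integral_const_mul]
        exact integral_congr_ae (Filter.Eventually.of_forall fun x => by ring)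
      rw [e, hc2]
      field_simp
    rw [hQ1Q, hQ2Q]
    simp only [add_mulVec, smul_mulVec, dotProduct_add, dotProduct_smul, smul_eq_mul]
    rw [hc1, hc2]
    field_simp
end

section
/- Let c > 0 and let f : ℝ → ℝ be a measurable probability density satisfying 0 ≤ f(x) ≤ c for all x ∈ ℝ, such that x ↦ x·f(x) and x ↦ x²·f(x) are integrable, and let μ = ∫_ℝ x·f(x) dx. Then ∫_ℝ (x − μ)²·f(x) dx ≥ 1/(12·c²). -/
open MeasureTheory

/-- A probability density bounded by `c` has variance at least `1/(12c²)`. -/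
theorem variance_lower_bound_of_bounded_density
    (c : ℝ) (hc : 0 < c) (f : ℝ → ℝ)
    (hf_meas : Measurable f)
    (hf_nonneg : ∀ x, 0 ≤ f x)
    (hf_le : ∀ x, f x ≤ c)
    (hf_density : ∫ x, f x = 1)
    (hint1 : Integrable fun x => x * f x)
    (hint2 : Integrable fun x => x ^ 2 * f x)
    (μ : ℝ) (hμ : μ = ∫ x, x * f x) :
    1 / (12 * c ^ 2) ≤ ∫ x, (x - μ) ^ 2 * f x := by
  have hf_int : Integrable f := by
    by_contra h
    rw [integral_undef h] at hf_density
    norm_num at hf_density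
  set a : ℝ := 1 / (2 * c) with ha
  have ha0 : 0 < a := by positivity
  set s : Set ℝ := Set.Icc (μ - a) (μ + a) with hs
  have hms : MeasurableSet s := measurableSet_Icc
  set g : ℝ → ℝ := s.indicator (fun _ => c) with hg
  -- integral of g is 1
  have hgint : ∫ x, g x = 1 := by
    rw [hg, integral_indicator_const _ hms]
    rw [hs, measureReal_def, Real.volume_Icc]
    rw [show μ + a - (μ - a) = 2 * a by ring]
    rw [ENNReal.toReal_ofReal (by positivity)]
    simp only [smul_eq_mul, ha]
    field_simp
  -- second moment of g
  have hJ : ∫ x, (x - μ) ^ 2 * g x = 1 / (12 * c ^ 2) := by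
    have heq : (fun x => (x - μ) ^ 2 * g x) = s.indicator (fun x => (x - μ) ^ 2 * c) := by
      funext x
      by_cases hx : x ∈ s <;> simp [hg, hx]
    rw [heq, integral_indicator hms, hs, integral_Icc_eq_integral_Ioc,
      ← intervalIntegral.integral_of_le (by linarith : μ - a ≤ μ + a)]
    have := intervalIntegral.integral_comp_sub_right (a := μ - a) (b := μ + a)
      (fun u => u ^ 2 * c) μ
    rw [this]
    rw [show μ - a - μ = -a by ring, show μ + a - μ = a by ring]
    rw [intervalIntegral.integral_mul_const, integral_pow]
    rw [ha]
    field_simp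
    ring_nf
    rw [← mul_pow, mul_inv_cancel₀ hc.ne']
    ring
  -- integrabilities
  have hF : Integrable (fun x => (x - μ) ^ 2 * f x) := by
    have : (fun x => (x - μ) ^ 2 * f x)
        = fun x => (x ^ 2 * f x - (2 * μ) * (x * f x)) + μ ^ 2 * f x := by
      funext x; ring
    rw [this]
    exact (hint2.sub (hint1.const_mul (2 * μ))).add (hf_int.const_mul _)
  have hGind : Integrable (fun x => (x - μ) ^ 2 * g x) := by
    have heq : (fun x => (x - μ) ^ 2 * g x) = s.indicator (fun x => (x - μ) ^ 2 * c) := by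
      funext x
      by_cases hx : x ∈ s <;> simp [hg, hx]
    rw [heq]
    refine (IntegrableOn.integrable_indicator ?_ hms)
    exact (Continuous.continuousOn (by continuity)).integrableOn_compact isCompact_Icc
  have hg_int : Integrable g := by
    rw [hg]
    exact ((integrableOn_const_iff (C := c)).mpr (Or.inr (by rw [hs, Real.volume_Icc]; exact ENNReal.ofReal_lt_top))).integrable_indicator hms
  have hG : Integrable (fun x => (x - μ) ^ 2 * g x + a ^ 2 * (f x - g x)) :=
    hGind.add ((hf_int.sub hg_int).const_mul _)
  -- pointwise inequality
  have hpt : ∀ x, (x - μ) ^ 2 * g x + a ^ 2 * (f x - g x) ≤ (x - μ) ^ 2 * f x := by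
    intro x
    by_cases hx : x ∈ s
    · have hgx : g x = c := by simp [hg, hx]
      rw [hgx]
      obtain ⟨h1, h2⟩ := hx
      have hsq : (x - μ) ^ 2 ≤ a ^ 2 := by nlinarith
      nlinarith [hf_le x]
    · have hgx : g x = 0 := by simp [hg, hx]
      rw [hgx]
      rw [hs, Set.mem_Icc, not_and_or, not_le, not_le] at hx
      have hsq : a ^ 2 ≤ (x - μ) ^ 2 := by
        rcases hx with h | h <;> nlinarith
      nlinarith [hf_nonneg x]
  have h2 : Integrable (fun x => a ^ 2 * (f x - g x)) := (hf_int.sub hg_int).const_mul _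
  have hmono := integral_mono hG hF hpt
  rw [integral_add hGind h2, integral_const_mul, integral_sub hf_int hg_int,
    hf_density, hgint, hJ] at hmono
  linarith
end
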